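/- arXiv:2605.07171 — 2 statements merged into one kernel-verified Lean document; each statement's English description precedes it below -/
import Mathlib

section
/- Let A ≥ 1 be a natural number, let δ ∈ (0,1), and let Δ̃₁, …, Δ̃_A be positive reals with Δ̃ := √(Σ_{k=1}^A Δ̃_k²). For n ≥ 1 set β(n) := √(log(1/δ)/(2n)). Then there exists a natural number n ≥ 1 with n ≤ (3√A + 1)² · log(1/δ) / (2 Δ̃²) + 1 such that Σ_{k=1}^A (Δ̃_k − 3β(n))² > β(n)²; consequently the least such n is at most (3√A + 1)² · log(1/δ) / (2 Δ̃²) + 1. -/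
theorem sampling_rounds_bound
    (A : ℕ) (hA : 1 ≤ A) (δ : ℝ) (hδ0 : 0 < δ) (hδ1 : δ < 1)
    (Δ : Fin A → ℝ) (hΔ : ∀ k, 0 < Δ k)
    (Δtot : ℝ) (hΔtot : Δtot = Real.sqrt (∑ k, Δ k ^ 2))
    (β : ℕ → ℝ) (hβ : ∀ n : ℕ, β n = Real.sqrt (Real.log (1 / δ) / (2 * n))) :
    (∃ n : ℕ, 1 ≤ n ∧
        (n : ℝ) ≤ (3 * Real.sqrt A + 1) ^ 2 * Real.log (1 / δ) / (2 * Δtot ^ 2) + 1 ∧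
        (∑ k, (Δ k - 3 * β n) ^ 2) > (β n) ^ 2) ∧
    ((sInf {n : ℕ | 1 ≤ n ∧ (∑ k, (Δ k - 3 * β n) ^ 2) > (β n) ^ 2} : ℕ) : ℝ) ≤
      (3 * Real.sqrt A + 1) ^ 2 * Real.log (1 / δ) / (2 * Δtot ^ 2) + 1 := by
  set L := Real.log (1 / δ) with hLdef
  have hL : 0 < L := Real.log_pos (by rw [lt_div_iff₀ hδ0]; linarith)
  have hne : (Finset.univ : Finset (Fin A)).Nonempty :=
    Finset.univ_nonempty_iff.mpr ⟨⟨0, hA⟩⟩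
  have hsum : 0 < ∑ k, Δ k ^ 2 :=
    Finset.sum_pos (fun k _ => pow_pos (hΔ k) 2) hne
  have hΔtot0 : 0 < Δtot := by rw [hΔtot]; exact Real.sqrt_pos.mpr hsum
  have hΔtot2 : Δtot ^ 2 = ∑ k, Δ k ^ 2 := by
    rw [hΔtot, Real.sq_sqrt hsum.le]
  have hsA : Real.sqrt A ^ 2 = (A : ℝ) := Real.sq_sqrt (Nat.cast_nonneg A)
  have hsA0 : (0:ℝ) ≤ Real.sqrt A := Real.sqrt_nonneg _
  set C := (3 * Real.sqrt A + 1) ^ 2 * L / (2 * Δtot ^ 2) with hCdef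
  have hC0 : 0 < C := by positivity
  set n := ⌊C⌋₊ + 1 with hn
  have hn1 : 1 ≤ n := Nat.le_add_left 1 _
  have hCn : C < (n : ℝ) := by exact_mod_cast Nat.lt_floor_add_one C
  have hnC : (n : ℝ) ≤ C + 1 := by
    push_cast [hn]; linarith [Nat.floor_le hC0.le]
  have hnpos : (0:ℝ) < (n : ℝ) := lt_trans hC0 hCn
  set b := β n with hbdef
  have hb2 : b ^ 2 = L / (2 * n) := by
    rw [hbdef, hβ, Real.sq_sqrt (by positivity)]
  have hb0 : 0 ≤ b := by rw [hbdef, hβ]; exact Real.sqrt_nonneg _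
  -- b is small: (3√A+1) * b < Δtot
  have hbsmall : (3 * Real.sqrt A + 1) * b < Δtot := by
    have h1 : ((3 * Real.sqrt A + 1) * b) ^ 2 < Δtot ^ 2 := by
      have h2 : b ^ 2 < Δtot ^ 2 / (3 * Real.sqrt A + 1) ^ 2 := by
        rw [hb2]
        rw [div_lt_div_iff₀ (by positivity) (by positivity)]
        have : (3 * Real.sqrt A + 1) ^ 2 * L < 2 * n * Δtot ^ 2 := by
          have := (div_lt_iff₀ (by positivity : (0:ℝ) < 2 * Δtot ^ 2)).mp hCn
          nlinarith [this]
        linarith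
      have h3 : (0:ℝ) < (3 * Real.sqrt A + 1) ^ 2 := by positivity
      calc ((3 * Real.sqrt A + 1) * b) ^ 2 = b ^ 2 * (3 * Real.sqrt A + 1) ^ 2 := by ring
        _ < (Δtot ^ 2 / (3 * Real.sqrt A + 1) ^ 2) * (3 * Real.sqrt A + 1) ^ 2 := by
            exact mul_lt_mul_of_pos_right h2 h3
        _ = Δtot ^ 2 := by field_simp
    exact lt_of_pow_lt_pow_left₀ 2 hΔtot0.le h1
  -- Cauchy-Schwarz: ∑ Δ ≤ √A * Δtot
  have hS0 : (0:ℝ) ≤ ∑ k, Δ k := Finset.sum_nonneg fun k _ => (hΔ k).le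
  have hCS : (∑ k, Δ k) ^ 2 ≤ (A : ℝ) * Δtot ^ 2 := by
    have := Finset.sum_mul_sq_le_sq_mul_sq Finset.univ (fun _ : Fin A => (1:ℝ)) Δ
    simpa [hΔtot2, Finset.card_univ] using this
  have hS : (∑ k, Δ k) ≤ Real.sqrt A * Δtot := by
    have h1 : (∑ k, Δ k) ^ 2 ≤ (Real.sqrt A * Δtot) ^ 2 := by
      rw [mul_pow, hsA]; exact hCS
    exact le_of_pow_le_pow_left₀ two_ne_zero (by positivity) h1
  -- expansion of the sum
  have hexp : (∑ k, (Δ k - 3 * b) ^ 2)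
      = (∑ k, Δ k ^ 2) - 6 * b * (∑ k, Δ k) + (A : ℝ) * (9 * b ^ 2) := by
    have : ∀ k : Fin A, (Δ k - 3 * b) ^ 2 = Δ k ^ 2 - 6 * b * Δ k + 9 * b ^ 2 := by
      intro k; ring
    simp only [this, Finset.sum_add_distrib, Finset.sum_sub_distrib, ← Finset.mul_sum,
      Finset.sum_const, Finset.card_univ, Fintype.card_fin, nsmul_eq_mul]
    ring
  have hkey : (∑ k, (Δ k - 3 * b) ^ 2) > b ^ 2 := by
    rw [hexp, ← hΔtot2]
    nlinarith [mul_le_mul_of_nonneg_left hS hb0, sq_nonneg (Δtot - 3 * Real.sqrt A * b - b),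
      mul_nonneg hsA0 hb0, hbsmall, hΔtot0]
  have hmem : n ∈ {m : ℕ | 1 ≤ m ∧ (∑ k, (Δ k - 3 * β m) ^ 2) > (β m) ^ 2} :=
    ⟨hn1, hkey⟩
  refine ⟨⟨n, hn1, hnC, hkey⟩, ?_⟩
  have hinf : sInf {m : ℕ | 1 ≤ m ∧ (∑ k, (Δ k - 3 * β m) ^ 2) > (β m) ^ 2} ≤ n :=
    Nat.sInf_le hmem
  calc ((sInf {m : ℕ | 1 ≤ m ∧ (∑ k, (Δ k - 3 * β m) ^ 2) > (β m) ^ 2} : ℕ) : ℝ)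
      ≤ (n : ℝ) := by exact_mod_cast hinf
    _ ≤ C + 1 := hnC
end

section
/- Let A ≥ 1 be a natural number, let Δ̃₁, …, Δ̃_A be positive reals with Δ̃ := √(Σ_{k=1}^A Δ̃_k²), and let β be a real number with 0 ≤ β and (3√A + 1)·β < Δ̃. Then Σ_{k=1}^A (Δ̃_k − 3β)² > β². -/
theorem shrunken_gaps_exceed
    (A : ℕ) (hA : 1 ≤ A)
    (Δ : Fin A → ℝ) (hΔ : ∀ k, 0 < Δ k)
    (Δtot : ℝ) (hΔtot : Δtot = Real.sqrt (∑ k, Δ k ^ 2))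
    (β : ℝ) (hβ0 : 0 ≤ β) (hβ : (3 * Real.sqrt A + 1) * β < Δtot) :
    (∑ k, (Δ k - 3 * β) ^ 2) > β ^ 2 := by
  set S := ∑ k, Δ k with hS
  set Q := ∑ k, Δ k ^ 2 with hQ
  have hQ0 : 0 ≤ Q := Finset.sum_nonneg fun k _ => sq_nonneg _
  have hCS : S ^ 2 ≤ A * Q := by
    have := sq_sum_le_card_mul_sum_sq (s := (Finset.univ : Finset (Fin A))) (f := Δ)
    simpa using this
  have hS0 : 0 ≤ S := Finset.sum_nonneg fun k _ => (hΔ k).le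
  set s := Real.sqrt A with hs
  have hs0 : 0 ≤ s := Real.sqrt_nonneg _
  have hs2 : s ^ 2 = A := Real.sq_sqrt (by positivity)
  have hΔtot2 : Δtot ^ 2 = Q := by
    rw [hΔtot]; exact Real.sq_sqrt hQ0
  have hΔtot0 : 0 ≤ Δtot := hΔtot ▸ Real.sqrt_nonneg _
  have hSle : S ≤ s * Δtot := by
    have key : S ^ 2 ≤ (s * Δtot) ^ 2 := by
      have : (s * Δtot) ^ 2 = A * Q := by rw [mul_pow, hs2, hΔtot2]
      linarith [hCS]
    exact (pow_le_pow_iff_left₀ hS0 (mul_nonneg hs0 hΔtot0) two_ne_zero).mp key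
  have hexp : (∑ k, (Δ k - 3 * β) ^ 2) = Q - 6 * β * S + 9 * A * β ^ 2 := by
    simp only [sub_sq, Finset.sum_add_distrib, Finset.sum_sub_distrib, ← Finset.sum_mul,
      ← Finset.mul_sum, hS, hQ]
    push_cast
    ring_nf
    simp [Finset.mul_sum, Finset.sum_mul]
    ring
  rw [hexp]
  have h2 : 0 < Δtot - (3 * s + 1) * β := by linarith
  have h1 : 0 < Δtot - (3 * s - 1) * β := by linarith
  nlinarith [mul_pos h1 h2, mul_nonneg hβ0 (sub_nonneg.mpr hSle), hΔtot2, hs2]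
end
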